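/- For every k ∈ ℤ: if z ∈ ℂ ∖ (−∞,0] then u_k(z) = Γ(−2iρ) s_k(z) + z^{−2iρ} e^{z} Γ(2iρ) (sin π(ε+1/2+iρ) / |sin π(ε+1/2−iρ)|) t_k(z), and if z ∈ ℂ ∖ [0,∞) then v_k(z) = (−z)^{2iρ} e^{−z} Γ(−2iρ) (sin π(ε+1/2+iρ) / |sin π(ε+1/2−iρ)|) s_k(z) + Γ(2iρ) t_k(z), where all complex powers are principal branches. -/

import Mathlib

open Complex MeasureTheory

noncomputable section

/-- Pochhammer symbol `(a)_n`. -/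
def poch (a : ℂ) (n : ℕ) : ℂ := ∏ i ∈ Finset.range n, (a + i)

/-- Confluent hypergeometric function `₁F₁(a;b;z)`. -/
def hyp1F1 (a b z : ℂ) : ℂ := ∑' n : ℕ, poch a n * z ^ n / (poch b n * (n.factorial : ℂ))

/-- Second solution `U(a;b;z)` of the confluent hypergeometric equation (principal branch). -/
def USol (a b z : ℂ) : ℂ :=
  Complex.Gamma (1 - b) / Complex.Gamma (a - b + 1) * hyp1F1 a b z
  + Complex.Gamma (b - 1) / Complex.Gamma a * z ^ (1 - b) * hyp1F1 (a - b + 1) (2 - b) z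

/-- `a_k = |k + ε + 1/2 + iρ|`. -/
def coefA (ρ ε : ℝ) (k : ℤ) : ℝ := norm ((k : ℂ) + (ε : ℂ) + 1/2 + I * (ρ : ℂ))

/-- `b_k = 2(k + ε)`. -/
def coefB (ρ ε : ℝ) (k : ℤ) : ℝ := 2 * ((k : ℝ) + ε)

/-- The solution `s_k(z)`. -/
def sSol (ρ ε : ℝ) (k : ℤ) (z : ℂ) : ℂ :=
  (-1 : ℂ) ^ k * ((norm (Complex.Gamma ((k : ℂ) + (ε : ℂ) + 1/2 + I * ρ)) : ℂ) /
      Complex.Gamma ((k : ℂ) + (ε : ℂ) + 1/2 - I * ρ)) *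
    hyp1F1 ((k : ℂ) + (ε : ℂ) + 1/2 + I * ρ) (1 + 2 * I * ρ) z

/-- The solution `t_k(z)`. -/
def tSol (ρ ε : ℝ) (k : ℤ) (z : ℂ) : ℂ :=
  ((norm (Complex.Gamma (1/2 - (k : ℂ) - (ε : ℂ) - I * ρ)) : ℂ) /
      Complex.Gamma (1/2 - (k : ℂ) - (ε : ℂ) + I * ρ)) *
    hyp1F1 (1/2 - (k : ℂ) - (ε : ℂ) - I * ρ) (1 - 2 * I * ρ) (-z)

/-- The solution `u_k(z)`, for `z ∉ (-∞,0]`. -/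
def uSol (ρ ε : ℝ) (k : ℤ) (z : ℂ) : ℂ :=
  (-1 : ℂ) ^ k * (norm (Complex.Gamma ((k : ℂ) + (ε : ℂ) + 1/2 + I * ρ)) : ℂ) *
    USol ((k : ℂ) + (ε : ℂ) + 1/2 + I * ρ) (1 + 2 * I * ρ) z

/-- The solution `v_k(z)`, for `z ∉ [0,∞)`. -/
def vSol (ρ ε : ℝ) (k : ℤ) (z : ℂ) : ℂ :=
  (norm (Complex.Gamma (1/2 - (k : ℂ) - (ε : ℂ) - I * ρ)) : ℂ) *
    USol (1/2 - (k : ℂ) - (ε : ℂ) - I * ρ) (1 - 2 * I * ρ) (-z)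

lemma poch_zero (a : ℂ) : poch a 0 = 1 := by simp [poch]

lemma poch_succ (a : ℂ) (n : ℕ) : poch a (n+1) = poch a n * (a + n) :=
  Finset.prod_range_succ _ n

lemma poch_succ' (a : ℂ) (n : ℕ) : poch a (n+1) = a * poch (a+1) n := by
  rw [poch, Finset.prod_range_succ']
  simp only [Nat.cast_zero, add_zero, mul_comm]
  congr 1
  unfold poch
  apply Finset.prod_congr rfl
  intro i _
  push_cast
  ring

lemma poch_add (a : ℂ) (m n : ℕ) : poch a (m+n) = poch a m * poch (a + m) n := by
  rw [poch, Finset.prod_range_add]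
  congr 1
  apply Finset.prod_congr rfl
  intro i _
  push_cast
  ring

lemma vandermonde (N : ℕ) : ∀ a b : ℂ,
    ∑ n ∈ Finset.range (N+1),
      (-1:ℂ)^n * (N.choose n : ℂ) * poch (b-a) n * poch (b+n) (N-n) = poch a N := by
  induction N with
  | zero => intro a b; simp [poch]
  | succ N ih =>
    intro a b
    set f : ℕ → ℂ := fun n =>
      (-1:ℂ)^n * (((N+1).choose n : ℕ) : ℂ) * poch (b-a) n * poch (b+n) (N+1-n) with hf
    set T : ℕ → ℂ := fun n =>
      (-1:ℂ)^n * ((N.choose n : ℕ) : ℂ) * poch (b-a) n * poch (b+n) (N+1-n) with hT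
    set A : ℕ → ℂ := fun n =>
      (-1:ℂ)^n * ((N.choose n : ℕ) : ℂ) * poch ((b+1)-a) n * poch ((b+1)+n) (N-n) with hA
    have key : ∀ n ∈ Finset.range (N+1), f (n+1) = -(b-a) * A n + T (n+1) := by
      intro n hn
      have hnN : n ≤ N := by simpa [Nat.lt_succ_iff] using hn
      have e1 : poch (b-a) (n+1) = (b-a) * poch ((b+1)-a) n := by
        rw [poch_succ']; congr 2; ring
      have e2 : ((b:ℂ) + ((n+1 : ℕ) : ℂ)) = (b+1) + (n : ℂ) := by push_cast; ring
      have e3 : N + 1 - (n+1) = N - n := Nat.succ_sub_succ N n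
      simp only [hf, hT, hA, e3, Nat.choose_succ_succ, Nat.cast_add, e1]
      rw [show (b + ((n:ℂ) + ((1:ℕ):ℂ))) = (b+1) + (n : ℂ) by push_cast; ring]
      push_cast
      ring
    have hTtop : T (N+1) = 0 := by simp [hT, Nat.choose_succ_self]
    have hTsum : ∑ n ∈ Finset.range (N+1), T n = poch a N * (b + N) := by
      have : ∀ n ∈ Finset.range (N+1),
          T n = ((-1:ℂ)^n * (N.choose n : ℂ) * poch (b-a) n * poch (b+n) (N-n)) * (b + N) := by
        intro n hn
        have hnN : n ≤ N := by simpa [Nat.lt_succ_iff] using hn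
        have e4 : N + 1 - n = (N - n) + 1 := by omega
        have e5 : ((N - n : ℕ) : ℂ) = (N : ℂ) - n := by
          push_cast [Nat.cast_sub hnN]; ring
        simp only [hT, e4, poch_succ, e5]
        ring
      rw [Finset.sum_congr rfl this, ← Finset.sum_mul, ih a b]
    calc ∑ n ∈ Finset.range (N+1+1), f n
        = ∑ n ∈ Finset.range (N+1), f (n+1) + f 0 := Finset.sum_range_succ' f (N+1)
      _ = ∑ n ∈ Finset.range (N+1), (-(b-a) * A n + T (n+1)) + T 0 := by
          rw [Finset.sum_congr rfl key]
          congr 1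
          simp [hf, hT]
      _ = -(b-a) * ∑ n ∈ Finset.range (N+1), A n
            + (∑ n ∈ Finset.range (N+1), T (n+1) + T 0) := by
          rw [Finset.sum_add_distrib, ← Finset.mul_sum]; ring
      _ = -(b-a) * poch a N + ∑ n ∈ Finset.range (N+1+1), T n := by
          rw [ih a (b+1), Finset.sum_range_succ' T (N+1)]
      _ = -(b-a) * poch a N + poch a N * (b + N) := by
          rw [Finset.sum_range_succ, hTtop, add_zero, hTsum]
      _ = poch a (N+1) := by rw [poch_succ]; ring

lemma add_nat_ne_zero {b : ℂ} (hb : b.im ≠ 0) (n : ℕ) : b + n ≠ 0 := by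
  intro h
  have := congrArg Complex.im h
  simp at this
  exact hb this

lemma add_nat_im_ne_zero {b : ℂ} (hb : b.im ≠ 0) (n : ℕ) : (b + n).im ≠ 0 := by
  simpa using hb

lemma poch_ne_zero {b : ℂ} (hb : b.im ≠ 0) (n : ℕ) : poch b n ≠ 0 := by
  induction n with
  | zero => simp [poch_zero]
  | succ n ih =>
    rw [poch_succ]
    exact mul_ne_zero ih (add_nat_ne_zero hb n)

lemma kummer_coeff {b : ℂ} (hb : b.im ≠ 0) (a z : ℂ) (n : ℕ) :
    ∑ k ∈ Finset.range (n+1),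
      (poch (b-a) k * (-z)^k / (poch b k * (k.factorial : ℂ))) *
        (z^(n-k) / ((n-k).factorial : ℂ))
      = poch a n * z^n / (poch b n * (n.factorial : ℂ)) := by
  have key : ∀ k ∈ Finset.range (n+1),
      (poch (b-a) k * (-z)^k / (poch b k * (k.factorial : ℂ))) *
        (z^(n-k) / ((n-k).factorial : ℂ))
      = ((-1:ℂ)^k * (n.choose k : ℂ) * poch (b-a) k * poch (b+k) (n-k)) *
          (z^n / (poch b n * (n.factorial : ℂ))) := by
    intro k hk
    have hkn : k ≤ n := by simpa [Nat.lt_succ_iff] using hk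
    have h1 : poch b n = poch b k * poch (b+k) (n-k) := by
      rw [← poch_add]; congr 1; omega
    have h2 : (n.factorial : ℂ) = (n.choose k : ℂ) * (k.factorial : ℂ) * ((n-k).factorial : ℂ) := by
      exact_mod_cast congrArg (Nat.cast : ℕ → ℂ) (Nat.choose_mul_factorial_mul_factorial hkn).symm
    have h3 : (-z)^k = (-1:ℂ)^k * z^k := by rw [neg_pow]
    have h4 : z^k * z^(n-k) = z^n := by rw [← pow_add]; congr 1; omega
    have n1 : poch b k ≠ 0 := poch_ne_zero hb k
    have n2 : poch (b+k) (n-k) ≠ 0 := poch_ne_zero (add_nat_im_ne_zero hb k) (n-k)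
    have n3 : (k.factorial : ℂ) ≠ 0 := by exact_mod_cast k.factorial_ne_zero
    have n4 : ((n-k).factorial : ℂ) ≠ 0 := by exact_mod_cast (n-k).factorial_ne_zero
    have n5 : (n.choose k : ℂ) ≠ 0 := by
      exact Nat.cast_ne_zero.mpr (Nat.choose_pos hkn).ne'
    rw [h1, h2, h3, ← h4]
    field_simp
  rw [Finset.sum_congr rfl key, ← Finset.sum_mul, vandermonde n a b, mul_div_assoc]

lemma summable_norm_hyp (a : ℂ) {b : ℂ} (hb : b.im ≠ 0) (z : ℂ) :
    Summable fun n => ‖poch a n * z ^ n / (poch b n * (n.factorial : ℂ))‖ := by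
  set f : ℕ → ℂ := fun n => poch a n * z ^ n / (poch b n * (n.factorial : ℂ)) with hf
  apply summable_of_ratio_norm_eventually_le (r := 1/2) (by norm_num)
  have h1 := tendsto_natCast_atTop_atTop (R := ℝ) |>.eventually_ge_atTop (2 * ‖b‖)
  have h2 := tendsto_natCast_atTop_atTop (R := ℝ) |>.eventually_ge_atTop ‖a‖
  have h3 := tendsto_natCast_atTop_atTop (R := ℝ) |>.eventually_ge_atTop (8 * ‖z‖)
  filter_upwards [h1, h2, h3] with n hn1 hn2 hn3
  have n1 : poch b n ≠ 0 := poch_ne_zero hb n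
  have n2 : (b : ℂ) + n ≠ 0 := add_nat_ne_zero hb n
  have n3 : (n.factorial : ℂ) ≠ 0 := by exact_mod_cast n.factorial_ne_zero
  have n4 : ((n : ℂ) + 1) ≠ 0 := by
    rw [show ((n:ℂ)+1) = ((n+1 : ℕ) : ℂ) by push_cast; ring]
    exact Nat.cast_ne_zero.mpr (Nat.succ_ne_zero n)
  have hfn : f (n+1) = f n * ((a + n) * z / ((b + n) * ((n : ℂ) + 1))) := by
    simp only [hf, poch_succ, pow_succ, Nat.factorial_succ]
    push_cast
    field_simp
  simp only [norm_norm]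
  rw [show poch a (n+1) * z^(n+1) / (poch b (n+1) * ((n+1).factorial : ℂ))
      = (poch a n * z ^ n / (poch b n * (n.factorial : ℂ)))
        * ((a + n) * z / ((b + n) * ((n : ℂ) + 1))) from hfn, norm_mul]
  rw [mul_comm (1/2 : ℝ) ‖f n‖]
  apply mul_le_mul_of_nonneg_left _ (norm_nonneg _)
  rw [norm_div, norm_mul, norm_mul]
  have e1 : ‖(n : ℂ)‖ = (n : ℝ) := by simp
  have e2 : ‖(n : ℂ) + 1‖ = (n : ℝ) + 1 := by
    rw [show ((n : ℂ) + 1) = (((n+1 : ℕ)) : ℂ) by push_cast; ring, RCLike.norm_natCast]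
    push_cast
    ring
  have t1 : ‖a + (n : ℂ)‖ ≤ ‖a‖ + n := by
    calc ‖a + (n : ℂ)‖ ≤ ‖a‖ + ‖(n : ℂ)‖ := norm_add_le _ _
    _ = ‖a‖ + n := by rw [e1]
  have t2 : (n : ℝ) - ‖b‖ ≤ ‖b + (n : ℂ)‖ := by
    have : ‖(n : ℂ)‖ ≤ ‖b + n‖ + ‖b‖ := by
      calc ‖(n : ℂ)‖ = ‖(b + n) + (-b)‖ := by ring_nf
      _ ≤ ‖b + n‖ + ‖-b‖ := norm_add_le _ _
      _ = ‖b + n‖ + ‖b‖ := by rw [norm_neg]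
    rw [e1] at this
    linarith
  have hd : (0:ℝ) < ‖b + (n : ℂ)‖ * ‖(n : ℂ) + 1‖ := by
    apply mul_pos (norm_pos_iff.mpr n2) (norm_pos_iff.mpr n4)
  rw [div_le_iff₀ hd, e2]
  have hz : (0:ℝ) ≤ ‖z‖ := norm_nonneg z
  have hbn : (0:ℝ) ≤ ‖b‖ := norm_nonneg b
  have han : (0:ℝ) ≤ ‖a‖ := norm_nonneg a
  nlinarith [mul_le_mul_of_nonneg_right t1 hz,
    mul_le_mul_of_nonneg_right t2 (by positivity : (0:ℝ) ≤ (n:ℝ)+1),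
    norm_nonneg (a + (n:ℂ)), norm_nonneg (b + (n:ℂ))]

lemma kummer (a : ℂ) {b : ℂ} (hb : b.im ≠ 0) (z : ℂ) :
    hyp1F1 a b z = Complex.exp z * hyp1F1 (b-a) b (-z) := by
  have hexp : Complex.exp z = ∑' n : ℕ, z^n / (n.factorial : ℂ) := by
    rw [Complex.exp_eq_exp_ℂ, NormedSpace.exp_eq_tsum_div]
  have hE : Summable fun n : ℕ => ‖z^n / (n.factorial : ℂ)‖ := by
    have := Real.summable_pow_div_factorial ‖z‖
    apply this.congr
    intro n
    simp [norm_div, norm_pow]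
  have hG : Summable fun n : ℕ =>
      ‖poch (b-a) n * (-z)^n / (poch b n * (n.factorial : ℂ))‖ :=
    summable_norm_hyp (b-a) hb (-z)
  rw [hyp1F1, hyp1F1, hexp, mul_comm,
    tsum_mul_tsum_eq_tsum_sum_range_of_summable_norm hG hE]
  exact (tsum_congr fun n => kummer_coeff hb a z n).symm

lemma ne_neg_nat {w : ℂ} (hw : w.im ≠ 0) : ∀ m : ℕ, w ≠ -m := by
  intro m h
  have := congrArg Complex.im h
  simp at this
  exact hw this

lemma gamma_ne_zero_of_im {w : ℂ} (hw : w.im ≠ 0) : Complex.Gamma w ≠ 0 :=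
  Complex.Gamma_ne_zero (ne_neg_nat hw)

lemma neg_one_zpow_mul_self (k : ℤ) : (-1 : ℂ)^k * (-1 : ℂ)^k = 1 := by
  rw [← mul_zpow]
  norm_num

lemma sin_pi_shift (k : ℤ) (p : ℂ) :
    Complex.sin ((Real.pi : ℂ) * ((k : ℂ) + p)) = (-1 : ℂ)^k * Complex.sin ((Real.pi : ℂ) * p) := by
  have h : (Real.pi : ℂ) * ((k : ℂ) + p) = (((k : ℝ) * Real.pi : ℝ) : ℂ) + (Real.pi : ℂ) * p := by
    push_cast; ring
  have hcos : Real.cos ((k : ℝ) * Real.pi) = (-1 : ℝ)^k := by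
    simpa using Real.cos_int_mul_pi_sub 0 k
  rw [h, Complex.sin_add, ← Complex.ofReal_sin, ← Complex.ofReal_cos,
    Real.sin_int_mul_pi, hcos]
  push_cast
  ring

lemma sin_pi_ne_zero {p : ℂ} (hp : p.im ≠ 0) : Complex.sin ((Real.pi : ℂ) * p) ≠ 0 := by
  intro h
  rw [Complex.sin_eq_zero_iff] at h
  obtain ⟨m, hm⟩ := h
  have := congrArg Complex.im hm
  simp [Complex.mul_im] at this
  exact hp (by linarith)

lemma gamma_core (k : ℤ) (p : ℂ) (hp : p.im ≠ 0) :
    ((-1:ℂ)^k * (norm (Complex.Gamma ((k:ℂ)+p)) : ℂ) / Complex.Gamma ((k:ℂ)+p)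
      = (Complex.sin ((Real.pi:ℂ)*p) /
          (norm (Complex.sin ((Real.pi:ℂ)*(starRingEnd ℂ p))) : ℂ))
        * (norm (Complex.Gamma (1-((k:ℂ)+p))) : ℂ)
        / Complex.Gamma (1-(starRingEnd ℂ ((k:ℂ)+p))))
  ∧ ((norm (Complex.Gamma (1-((k:ℂ)+p))) : ℂ) / Complex.Gamma (1-((k:ℂ)+p))
      = Complex.sin ((Real.pi:ℂ)*p) /
          (norm (Complex.sin ((Real.pi:ℂ)*(starRingEnd ℂ p))) : ℂ)
        * ((-1:ℂ)^k * (norm (Complex.Gamma ((k:ℂ)+p)) : ℂ))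
        / Complex.Gamma (starRingEnd ℂ ((k:ℂ)+p))) := by
  set A : ℂ := (k:ℂ) + p with hA
  set G : ℂ := Complex.Gamma A with hG
  set w : ℂ := Complex.sin ((Real.pi:ℂ) * p) with hw
  have hAim : A.im = p.im := by simp [hA]
  have hGne : G ≠ 0 := gamma_ne_zero_of_im (by rw [hAim]; exact hp)
  have h1Aim : (1 - A).im = -p.im := by simp [hA]
  have hHne : Complex.Gamma (1 - A) ≠ 0 :=
    gamma_ne_zero_of_im (by rw [h1Aim]; simpa using hp)
  have hwne : w ≠ 0 := sin_pi_ne_zero hp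
  have hm : (-1:ℂ)^k ≠ 0 := by
    intro h
    have := neg_one_zpow_mul_self k
    rw [h] at this; simp at this
  -- reflection
  have hrefl : G * Complex.Gamma (1 - A) = (Real.pi:ℂ) / Complex.sin ((Real.pi:ℂ) * A) :=
    Complex.Gamma_mul_Gamma_one_sub A
  have hsinA : Complex.sin ((Real.pi:ℂ) * A) = (-1:ℂ)^k * w := sin_pi_shift k p
  have hh : Complex.Gamma (1 - A) = (-1:ℂ)^k * (Real.pi:ℂ) / (w * G) := by
    rw [hsinA] at hrefl
    field_simp at hrefl ⊢
    linear_combination ((-1:ℂ)^k) * hrefl +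
      (- Complex.Gamma (1-A) * w * G) *
        (by rw [sq]; exact neg_one_zpow_mul_self k : ((-1:ℂ)^k)^2 = 1)
  -- abs of Gamma (1-A)
  have habs : (norm (Complex.Gamma (1 - A)) : ℂ)
      = (Real.pi:ℂ) / ((norm w : ℂ) * (norm G : ℂ)) := by
    rw [hh]
    have : norm ((-1:ℂ)^k * (Real.pi:ℂ) / (w * G))
        = Real.pi / (norm w * norm G) := by
      rw [norm_div, norm_mul, norm_mul, norm_zpow]
      simp [abs_of_pos Real.pi_pos]
    rw [this]
    push_cast
    ring
  -- conjugation facts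
  have hGconj : Complex.Gamma (starRingEnd ℂ A) = starRingEnd ℂ G := Complex.Gamma_conj A
  have h1conj : (1 : ℂ) - starRingEnd ℂ A = starRingEnd ℂ (1 - A) := by
    rw [map_sub, map_one]
  have hHconj : Complex.Gamma (1 - starRingEnd ℂ A) = starRingEnd ℂ (Complex.Gamma (1 - A)) := by
    rw [h1conj, Complex.Gamma_conj]
  have hwconj : Complex.sin ((Real.pi:ℂ) * (starRingEnd ℂ p)) = starRingEnd ℂ w := by
    rw [hw, ← Complex.sin_conj, map_mul, Complex.conj_ofReal]
  have hwabs : (norm (Complex.sin ((Real.pi:ℂ) * (starRingEnd ℂ p))) : ℝ)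
      = norm w := by rw [hwconj, RCLike.norm_conj]
  have hGG : G * starRingEnd ℂ G = ((norm G : ℂ))^2 := by
    rw [Complex.mul_conj, Complex.normSq_eq_norm_sq]
    push_cast; ring
  have hww : w * starRingEnd ℂ w = ((norm w : ℂ))^2 := by
    rw [Complex.mul_conj, Complex.normSq_eq_norm_sq]
    push_cast; ring
  have hGabs : (norm G : ℝ) ≠ 0 := norm_ne_zero_iff.mpr hGne
  have hwabs0 : (norm w : ℝ) ≠ 0 := norm_ne_zero_iff.mpr hwne
  have hGconj_ne : starRingEnd ℂ G ≠ 0 := by simpa using hGne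
  have hwconj_ne : starRingEnd ℂ w ≠ 0 := by simpa using hwne
  have hHconj' : Complex.Gamma (1 - starRingEnd ℂ A)
      = (-1:ℂ)^k * (Real.pi:ℂ) / (starRingEnd ℂ w * starRingEnd ℂ G) := by
    rw [hHconj, hh]
    rw [map_div₀, map_mul, map_mul]
    congr 1
    · congr 1
      · rw [map_zpow₀]; norm_num
      · exact Complex.conj_ofReal _
  have hsq : ((-1:ℂ)^k)^2 = 1 := by rw [sq]; exact neg_one_zpow_mul_self k
  have hpi : (Real.pi : ℂ) ≠ 0 := by exact_mod_cast Real.pi_ne_zero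
  have hGabsC : ((norm G : ℂ)) ≠ 0 := by exact_mod_cast hGabs
  have hwabsC : ((norm w : ℂ)) ≠ 0 := by exact_mod_cast hwabs0
  constructor
  · rw [hwabs, hHconj', habs]
    field_simp
    linear_combination (-(w * starRingEnd ℂ w)) * hGG
      + (-((norm G : ℂ))^2) * hww
      + (((norm G : ℂ))^2 * ((norm w : ℂ))^2) * hsq
  · rw [hwabs, hGconj, habs, hh]
    field_simp
    linear_combination hGG
      + (-((norm G : ℂ))^2) * hsq

/-- connection formulas expressing `u_k(z)` and `v_k(z)` in terms of
`s_k(z)` and `t_k(z)`. -/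
theorem laguerre_connection_u_v (ρ ε : ℝ) (hρ : 0 < ρ) (hε : ε ∈ Set.Ico (0 : ℝ) 1)
    (z : ℂ) (k : ℤ) :
    (¬(z.im = 0 ∧ z.re ≤ 0) →
      uSol ρ ε k z =
        Complex.Gamma (-2 * I * ρ) * sSol ρ ε k z +
        z ^ (-2 * I * (ρ : ℂ)) * Complex.exp z * Complex.Gamma (2 * I * ρ) *
          (Complex.sin ((Real.pi : ℂ) * ((ε : ℂ) + 1/2 + I * ρ)) /
            (norm (Complex.sin ((Real.pi : ℂ) * ((ε : ℂ) + 1/2 - I * ρ))) : ℂ)) *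
          tSol ρ ε k z) ∧
    (¬(z.im = 0 ∧ 0 ≤ z.re) →
      vSol ρ ε k z =
        (-z) ^ (2 * I * (ρ : ℂ)) * Complex.exp (-z) * Complex.Gamma (-2 * I * ρ) *
          (Complex.sin ((Real.pi : ℂ) * ((ε : ℂ) + 1/2 + I * ρ)) /
            (norm (Complex.sin ((Real.pi : ℂ) * ((ε : ℂ) + 1/2 - I * ρ))) : ℂ)) *
          sSol ρ ε k z +
        Complex.Gamma (2 * I * ρ) * tSol ρ ε k z) := by
  have hρ0 : ρ ≠ 0 := ne_of_gt hρ
  have hp : ((ε:ℂ) + 1/2 + I * (ρ:ℂ)).im ≠ 0 := by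
    simp [Complex.add_im, Complex.mul_im]
    exact hρ0
  have hconjp : starRingEnd ℂ ((ε:ℂ) + 1/2 + I * (ρ:ℂ)) = (ε:ℂ) + 1/2 - I * (ρ:ℂ) := by
    simp [Complex.ext_iff]
    try ring
  have claim1 := (gamma_core k ((ε:ℂ) + 1/2 + I * (ρ:ℂ)) hp).1
  have claim2 := (gamma_core k ((ε:ℂ) + 1/2 + I * (ρ:ℂ)) hp).2
  rw [hconjp] at claim1 claim2
  have hconjA : starRingEnd ℂ ((k:ℂ) + ((ε:ℂ) + 1/2 + I * (ρ:ℂ)))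
      = (k:ℂ) + (ε:ℂ) + 1/2 - I * (ρ:ℂ) := by
    simp [Complex.ext_iff]
    try ring
  rw [hconjA] at claim1 claim2
  rw [show (k:ℂ) + ((ε:ℂ) + 1/2 + I * (ρ:ℂ)) = (k:ℂ) + (ε:ℂ) + 1/2 + I * (ρ:ℂ) by ring]
    at claim1 claim2
  rw [show (1:ℂ) - ((k:ℂ) + (ε:ℂ) + 1/2 + I * (ρ:ℂ)) = 1/2 - (k:ℂ) - (ε:ℂ) - I * (ρ:ℂ) by ring]
    at claim1 claim2
  rw [show (1:ℂ) - ((k:ℂ) + (ε:ℂ) + 1/2 - I * (ρ:ℂ)) = 1/2 - (k:ℂ) - (ε:ℂ) + I * (ρ:ℂ) by ring]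
    at claim1
  constructor
  · intro _
    rw [uSol, USol, sSol, tSol]
    rw [show ((k:ℂ) + (ε:ℂ) + 1/2 + I * (ρ:ℂ)) - (1 + 2 * I * (ρ:ℂ)) + 1
        = (k:ℂ) + (ε:ℂ) + 1/2 - I * (ρ:ℂ) by ring]
    rw [show (1:ℂ) - (1 + 2 * I * (ρ:ℂ)) = -2 * I * (ρ:ℂ) by ring]
    rw [show (2:ℂ) - (1 + 2 * I * (ρ:ℂ)) = 1 - 2 * I * (ρ:ℂ) by ring]
    rw [show (1:ℂ) + 2 * I * (ρ:ℂ) - 1 = 2 * I * (ρ:ℂ) by ring]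
    rw [kummer ((k:ℂ) + (ε:ℂ) + 1/2 - I * (ρ:ℂ))
      (show ((1:ℂ) - 2 * I * (ρ:ℂ)).im ≠ 0 by
        simp [Complex.sub_im, Complex.mul_im]; exact hρ0) z]
    rw [show (1:ℂ) - 2 * I * (ρ:ℂ) - ((k:ℂ) + (ε:ℂ) + 1/2 - I * (ρ:ℂ))
        = 1/2 - (k:ℂ) - (ε:ℂ) - I * (ρ:ℂ) by ring]
    linear_combination (Complex.Gamma (2 * I * (ρ:ℂ)) * z ^ (-2 * I * (ρ:ℂ)) * Complex.exp z *
      hyp1F1 (1/2 - (k:ℂ) - (ε:ℂ) - I * (ρ:ℂ)) (1 - 2 * I * (ρ:ℂ)) (-z)) * claim1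
  · intro _
    rw [vSol, USol, sSol, tSol]
    rw [show (1/2 - (k:ℂ) - (ε:ℂ) - I * (ρ:ℂ)) - (1 - 2 * I * (ρ:ℂ)) + 1
        = 1/2 - (k:ℂ) - (ε:ℂ) + I * (ρ:ℂ) by ring]
    rw [show (1:ℂ) - (1 - 2 * I * (ρ:ℂ)) = 2 * I * (ρ:ℂ) by ring]
    rw [show (1:ℂ) - 2 * I * (ρ:ℂ) - 1 = -2 * I * (ρ:ℂ) by ring]
    rw [show (2:ℂ) - (1 - 2 * I * (ρ:ℂ)) = 1 + 2 * I * (ρ:ℂ) by ring]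
    rw [kummer (1/2 - (k:ℂ) - (ε:ℂ) + I * (ρ:ℂ))
      (show ((1:ℂ) + 2 * I * (ρ:ℂ)).im ≠ 0 by
        simp [Complex.add_im, Complex.mul_im]; exact hρ0) (-z)]
    rw [show (1:ℂ) + 2 * I * (ρ:ℂ) - (1/2 - (k:ℂ) - (ε:ℂ) + I * (ρ:ℂ))
        = (k:ℂ) + (ε:ℂ) + 1/2 + I * (ρ:ℂ) by ring]
    rw [neg_neg]
    linear_combination ((-z) ^ (2 * I * (ρ:ℂ)) * Complex.exp (-z) *
      Complex.Gamma (-2 * I * (ρ:ℂ)) *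
      hyp1F1 ((k:ℂ) + (ε:ℂ) + 1/2 + I * (ρ:ℂ)) (1 + 2 * I * (ρ:ℂ)) z) * claim2
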